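/- Let α and β be finite types with decidable equality and let A : Matrix (α ⊕ β) (α ⊕ β) (ZMod 2) be symmetric (Aᵀ = A), with blocks P = A.toBlocks₁₁ and Q = A.toBlocks₁₂. Let W be the span over ZMod 2 of the standard basis vectors indexed by Sum.inl a (a : α) inside the space (α ⊕ β) → ZMod 2, and let W' be the 𝓔-annihilator of W, i.e. the submodule of vectors v such that (A.mulVec v) (Sum.inl a) = 0 for all a : α. Then W ⊔ W' = ⊤ (W and its annihilator span the whole space) if and only if there exists a matrix M : Matrix α β (ZMod 2) with Q = P * M. -/

import Mathlib

open Matrix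

/-- For a symmetric matrix `A` over `𝔽₂` indexed by `α ⊕ β`, the span `W` of the
standard basis vectors indexed by `Sum.inl a` together with its `𝓔`-annihilator
`W' = {v | ∀ a, (A.mulVec v) (Sum.inl a) = 0}` spans the whole space if and only if
there is a matrix `M` with `A.toBlocks₁₂ = A.toBlocks₁₁ * M`. -/
theorem stmt_0 {α β : Type*} [Fintype α] [DecidableEq α] [Fintype β] [DecidableEq β]
    (A : Matrix (α ⊕ β) (α ⊕ β) (ZMod 2)) (hA : Aᵀ = A) :
    (Submodule.span (ZMod 2)
        (Set.range fun a : α => (Pi.single (Sum.inl a) 1 : (α ⊕ β) → ZMod 2)) ⊔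
      (⨅ a : α, LinearMap.ker
        ((LinearMap.proj (Sum.inl a) : ((α ⊕ β) → ZMod 2) →ₗ[ZMod 2] ZMod 2).comp
          A.mulVecLin)) = ⊤) ↔
    ∃ M : Matrix α β (ZMod 2), A.toBlocks₁₂ = A.toBlocks₁₁ * M := by
  classical
  set W := Submodule.span (ZMod 2)
      (Set.range fun a : α => (Pi.single (Sum.inl a) 1 : (α ⊕ β) → ZMod 2)) with hWdef
  set W' := ⨅ a : α, LinearMap.ker
      ((LinearMap.proj (Sum.inl a) : ((α ⊕ β) → ZMod 2) →ₗ[ZMod 2] ZMod 2).comp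
        A.mulVecLin) with hW'def
  have two : ∀ x : ZMod 2, x + x = 0 := by decide
  have cancel : ∀ x y : ZMod 2, x + y = 0 → y = x := by decide
  have hW'char : ∀ v : (α ⊕ β) → ZMod 2, v ∈ W' ↔
      ∀ a : α, (∑ a' : α, A.toBlocks₁₁ a a' * v (Sum.inl a')) +
        (∑ b : β, A.toBlocks₁₂ a b * v (Sum.inr b)) = 0 := by
    intro v
    rw [hW'def]
    simp only [Submodule.mem_iInf, LinearMap.mem_ker, LinearMap.comp_apply,
      LinearMap.proj_apply, Matrix.mulVecLin_apply]
    refine forall_congr' fun a => ?_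
    rw [Matrix.mulVec, dotProduct, Fintype.sum_sum_type]
    rfl
  have hWinr : ∀ x ∈ W, ∀ b : β, x (Sum.inr b) = 0 := by
    intro x hx b
    have hle : W ≤ LinearMap.ker
        (LinearMap.proj (Sum.inr b) : ((α ⊕ β) → ZMod 2) →ₗ[ZMod 2] ZMod 2) := by
      rw [hWdef, Submodule.span_le]
      rintro _ ⟨a, rfl⟩
      simp [LinearMap.mem_ker, Pi.single_apply]
    exact hle hx
  have hmemW : ∀ x : (α ⊕ β) → ZMod 2, (∀ b, x (Sum.inr b) = 0) → x ∈ W := by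
    intro x hx
    have hx2 : x = ∑ a : α, x (Sum.inl a) • (Pi.single (Sum.inl a) 1 : (α ⊕ β) → ZMod 2) := by
      ext i
      cases i with
      | inl a => simp [Finset.sum_apply, Pi.single_apply]
      | inr b => simp [Finset.sum_apply, Pi.single_apply, hx b]
    rw [hx2]
    exact Submodule.sum_mem _ fun a _ => Submodule.smul_mem _ _
      (Submodule.subset_span ⟨a, rfl⟩)
  constructor
  · intro h
    have he : ∀ b : β, ∃ u ∈ W, ∃ w ∈ W',
        u + w = (Pi.single (Sum.inr b) 1 : (α ⊕ β) → ZMod 2) := by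
      intro b
      exact Submodule.mem_sup.mp (h ▸ Submodule.mem_top)
    choose u hu w hw hsum using he
    refine ⟨fun a b => w b (Sum.inl a), ?_⟩
    ext a b
    have h1 := (hW'char (w b)).mp (hw b) a
    have h2 : ∀ b', w b (Sum.inr b') = if b' = b then 1 else 0 := by
      intro b'
      have h3 := congrFun (hsum b) (Sum.inr b')
      have h0 := hWinr _ (hu b) b'
      simp only [Pi.add_apply, h0, zero_add] at h3
      rw [h3, Pi.single_apply]
      simp [Sum.inr.injEq, eq_comm]
    have h4 : (∑ b' : β, A.toBlocks₁₂ a b' * w b (Sum.inr b')) = A.toBlocks₁₂ a b := by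
      simp [h2, mul_ite, Finset.sum_ite_eq']
    rw [h4] at h1
    refine Eq.trans ?_ Matrix.mul_apply.symm
    exact cancel _ _ h1
  · rintro ⟨M, hM⟩
    rw [eq_top_iff]
    intro v _
    set wv : (α ⊕ β) → ZMod 2 :=
      Sum.elim (fun a => ∑ b, M a b * v (Sum.inr b)) (fun b => v (Sum.inr b)) with hwv
    have hwW' : wv ∈ W' := by
      rw [hW'char]
      intro a
      have key : (∑ a' : α, A.toBlocks₁₁ a a' * (∑ b, M a' b * v (Sum.inr b)))
          = ∑ b, A.toBlocks₁₂ a b * v (Sum.inr b) := by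
        rw [hM]
        simp_rw [Finset.mul_sum, Matrix.mul_apply, Finset.sum_mul]
        rw [Finset.sum_comm]
        congr 1; ext b; congr 1; ext a'; ring
      simp only [hwv, Sum.elim_inl, Sum.elim_inr]
      rw [key]
      exact two _
    have hvW : v - wv ∈ W := by
      apply hmemW
      intro b
      simp [hwv]
    have hv : v = (v - wv) + wv := by ring
    rw [hv]
    exact Submodule.add_mem _ (Submodule.mem_sup_left hvW) (Submodule.mem_sup_right hwW')
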